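/- Let f : ℝⁿ → ℝⁿ be a Lipschitz map that maps each face of the unit cube [0,1]ⁿ into itself (i.e., for each i, f maps {x ∈ [0,1]ⁿ : x_i = 0} into itself and {x ∈ [0,1]ⁿ : x_i = 1} into itself). Then f restricted to [0,1]ⁿ is surjective onto [0,1]ⁿ. -/

import Mathlib

open Finset

namespace SpernerCube

def vert {N : ℕ} (z : Fin N → ℕ) (ρ : Equiv.Perm (Fin N)) (k : ℕ) : Fin N → ℕ :=
  fun i => z i + if (ρ i : ℕ) < k then 1 else 0

def box (N m : ℕ) : Finset (Fin N → ℕ) := Fintype.piFinset fun _ => Finset.range m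

def simps (N m : ℕ) : Finset ((Fin N → ℕ) × Equiv.Perm (Fin N)) := (box N m) ×ˢ Finset.univ

def fully {N : ℕ} (L : (Fin N → ℕ) → ℕ) (p : (Fin N → ℕ) × Equiv.Perm (Fin N)) : Prop :=
  Finset.range (N+1) ⊆ (Finset.range (N+1)).image (fun k => L (vert p.1 p.2 k))

def door {N : ℕ} (L : (Fin N → ℕ) → ℕ) (p : (Fin N → ℕ) × Equiv.Perm (Fin N)) (k : ℕ) : Prop :=
  Finset.range N ⊆ ((Finset.range (N+1)).erase k).image (fun j => L (vert p.1 p.2 j))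

instance {N : ℕ} (L : (Fin N → ℕ) → ℕ) (p) : Decidable (fully L p) := by
  unfold fully; infer_instance

instance {N : ℕ} (L : (Fin N → ℕ) → ℕ) (p) (k : ℕ) : Decidable (door L p k) := by
  unfold door; infer_instance

lemma vert_grid {N m : ℕ} {z : Fin N → ℕ} (hz : z ∈ box N m) (ρ : Equiv.Perm (Fin N)) (k : ℕ) :
    ∀ i, vert z ρ k i ≤ m := by
  intro i
  have := (Fintype.mem_piFinset.1 hz) i
  simp only [Finset.mem_range] at this
  unfold vert
  split <;> omega

/-- The boundary predicate for a flag `((z, ρ), k)`. -/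
def bdry (m n : ℕ) (a : ((Fin (n+1) → ℕ) × Equiv.Perm (Fin (n+1))) × ℕ) : Prop :=
  (a.2 = 0 ∧ a.1.1 (a.1.2.symm 0) = m - 1) ∨ (a.2 = n+1 ∧ a.1.1 (a.1.2.symm (Fin.last n)) = 0)

instance (m n : ℕ) (a) : Decidable (bdry m n a) := by unfold bdry; infer_instance

/-- The pivot map on flags. -/
def pivot (n : ℕ) (a : ((Fin (n+1) → ℕ) × Equiv.Perm (Fin (n+1))) × ℕ) :
    ((Fin (n+1) → ℕ) × Equiv.Perm (Fin (n+1))) × ℕ :=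
  if a.2 = 0 then
    ((fun i => a.1.1 i + if a.1.2 i = 0 then 1 else 0, (finRotate (n+1))⁻¹ * a.1.2), n+1)
  else if a.2 = n+1 then
    ((fun i => a.1.1 i - if a.1.2 i = Fin.last n then 1 else 0, finRotate (n+1) * a.1.2), 0)
  else
    ((a.1.1, Equiv.swap ⟨(a.2 - 1) % (n+1), Nat.mod_lt _ n.succ_pos⟩
        ⟨a.2 % (n+1), Nat.mod_lt _ n.succ_pos⟩ * a.1.2), a.2)


lemma claimA (d : ℕ) (ℓ : ℕ → ℕ) (hle : ∀ k < d + 1, ℓ k ≤ d) :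
    (((Finset.range (d+1)).filter
        (fun k => Finset.range d ⊆ ((Finset.range (d+1)).erase k).image ℓ)).card : ZMod 2)
      = if Finset.range (d+1) ⊆ (Finset.range (d+1)).image ℓ then 1 else 0 := by
  set S := Finset.range (d+1) with hS
  set I := S.image ℓ with hI
  have hsub : ∀ k, (S.erase k).image ℓ ⊆ I := fun k => image_subset_image (erase_subset _ _)
  by_cases hfull : S ⊆ I
  · rw [if_pos hfull]
    have hIcard : I.card ≤ S.card := card_image_le
    have hIeq : S = I := eq_of_subset_of_card_le hfull hIcard
    have hinj : Set.InjOn ℓ S := by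
      apply Finset.injOn_of_card_image_eq
      rw [← hI, ← hIeq]
    obtain ⟨k₀, hk₀S, hk₀⟩ : ∃ k₀ ∈ S, ℓ k₀ = d := by
      have : d ∈ I := by rw [← hIeq]; simp [hS]
      rw [hI, mem_image] at this; exact this
    have : S.filter (fun k => Finset.range d ⊆ ((Finset.range (d+1)).erase k).image ℓ) = {k₀} := by
      ext k
      simp only [mem_filter, mem_singleton]
      constructor
      · rintro ⟨hkS, hdoor⟩
        by_contra hne
        have hlk : ℓ k ≤ d := hle k (by simpa [hS] using hkS)
        have hlkd : ℓ k ≠ d := fun h => hne (hinj hkS hk₀S (h.trans hk₀.symm))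
        have : ℓ k ∈ Finset.range d := by simp; omega
        obtain ⟨j, hj, hjeq⟩ := mem_image.1 (hdoor this)
        have hjS : j ∈ S := mem_of_mem_erase hj
        have : j = k := hinj hjS hkS hjeq
        exact (ne_of_mem_erase hj) this
      · rintro rfl
        refine ⟨hk₀S, fun c hc => ?_⟩
        have : c ∈ I := hfull (by simp [hS] at hc ⊢; omega)
        obtain ⟨j, hjS, hjeq⟩ := mem_image.1 this
        refine mem_image.2 ⟨j, mem_erase.2 ⟨?_, hjS⟩, hjeq⟩
        rintro rfl
        rw [hk₀] at hjeq
        simp [hS] at hc; omega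
    rw [this]; simp
  · rw [if_neg hfull]
    by_cases hmiss : Finset.range d ⊆ I
    · have hd : d ∉ I := by
        intro hd
        exact hfull (fun c hc => by
          rcases Nat.lt_or_ge c d with h | h
          · exact hmiss (by simpa using h)
          · have : c = d := by simp [hS] at hc; omega
            exact this ▸ hd)
      have himg : I ⊆ Finset.range d := by
        intro b hb
        obtain ⟨k, hkS, hkeq⟩ := mem_image.1 hb
        have h1 : b ≤ d := hkeq ▸ hle k (by simpa [hS] using hkS)
        have h2 : b ≠ d := fun h => hd (h ▸ hb)
        simp; omega
      obtain ⟨k₁, hk₁, k₂, hk₂, hne, heq⟩ :=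
        Finset.exists_ne_map_eq_of_card_lt_of_maps_to
          (show (Finset.range d).card < S.card by simp [hS])
          (fun a ha => himg (mem_image_of_mem ℓ ha))
      have : S.filter (fun k => Finset.range d ⊆ ((Finset.range (d+1)).erase k).image ℓ)
          = {k₁, k₂} := by
        ext k
        simp only [mem_filter, mem_insert, mem_singleton]
        constructor
        · rintro ⟨hkS, hdoor⟩
          by_contra hk
          push_neg at hk
          have hIek : (S.erase k).image ℓ = Finset.range d :=
            le_antisymm ((hsub k).trans himg) hdoor
          have hinj : Set.InjOn ℓ (S.erase k) := by
            apply Finset.injOn_of_card_image_eq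
            rw [hIek, card_erase_of_mem hkS]
            simp [hS]
          have h1 : k₁ ∈ S.erase k := mem_erase.2 ⟨fun h => hk.1 h.symm, hk₁⟩
          have h2 : k₂ ∈ S.erase k := mem_erase.2 ⟨fun h => hk.2 h.symm, hk₂⟩
          exact hne (hinj h1 h2 heq)
        · intro hk
          have hkS : k ∈ S := by rcases hk with rfl | rfl <;> assumption
          refine ⟨hkS, fun c hc => ?_⟩
          obtain ⟨j, hjS, hjeq⟩ := mem_image.1 (hmiss hc)
          by_cases hjk : j = k
          · subst hjk
            rcases hk with rfl | rfl
            · exact mem_image.2 ⟨k₂, mem_erase.2 ⟨hne.symm, hk₂⟩, heq ▸ hjeq⟩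
            · exact mem_image.2 ⟨k₁, mem_erase.2 ⟨hne, hk₁⟩, heq.symm ▸ hjeq⟩
          · exact mem_image.2 ⟨j, mem_erase.2 ⟨hjk, hjS⟩, hjeq⟩
      rw [this, card_insert_of_notMem (by simpa using hne), card_singleton]
      decide
    · obtain ⟨c, hc, hcI⟩ : ∃ c ∈ Finset.range d, c ∉ I := by
        by_contra h; push_neg at h; exact hmiss h
      have : S.filter (fun k => Finset.range d ⊆ ((Finset.range (d+1)).erase k).image ℓ) = ∅ := by
        ext k
        simp only [mem_filter, notMem_empty, iff_false, not_and]
        intro _ hdoor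
        exact hcI (hsub k (hdoor hc))
      rw [this]; simp

lemma rot_inv_zero (n : ℕ) : (finRotate (n+1))⁻¹ 0 = Fin.last n := by
  rw [Equiv.Perm.inv_eq_iff_eq, finRotate_succ_apply, Fin.last_add_one]

lemma rot_inv_val {n : ℕ} (x : Fin (n+1)) (hx : x ≠ 0) :
    (((finRotate (n+1))⁻¹ x : Fin (n+1)) : ℕ) = (x : ℕ) - 1 := by
  set y := (finRotate (n+1))⁻¹ x with hy
  have hxy : x = y + 1 := by
    rw [hy, ← finRotate_succ_apply, ← Equiv.Perm.mul_apply, mul_inv_cancel, Equiv.Perm.one_apply]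
  have hval : (x : ℕ) = if y = Fin.last n then 0 else (y : ℕ) + 1 := by
    rw [hxy, Fin.val_add_one]
  by_cases h : y = Fin.last n
  · exfalso; apply hx; rw [hxy, h, Fin.last_add_one]
  · rw [if_neg h] at hval; omega

lemma rot_val {n : ℕ} (x : Fin (n+1)) (hx : x ≠ Fin.last n) :
    ((finRotate (n+1) x : Fin (n+1)) : ℕ) = (x : ℕ) + 1 := by
  rw [finRotate_succ_apply, Fin.val_add_one, if_neg hx]

lemma rot_last (n : ℕ) : finRotate (n+1) (Fin.last n) = 0 := by
  rw [finRotate_succ_apply, Fin.last_add_one]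

lemma range_erase_zero (n : ℕ) :
    (Finset.range (n+2)).erase 0 = (Finset.range (n+1)).image (· + 1) := by
  ext b
  simp only [mem_erase, mem_range, mem_image]
  constructor
  · intro h; exact ⟨b - 1, by omega, by omega⟩
  · rintro ⟨a, ha, rfl⟩; omega

lemma range_erase_top (n : ℕ) :
    (Finset.range (n+2)).erase (n+1) = Finset.range (n+1) := by
  ext b
  simp only [mem_erase, mem_range]
  omega

lemma erase_zero_image_sub (n : ℕ) :
    ((Finset.range (n+2)).erase 0).image (· - 1) = Finset.range (n+1) := by
  ext b
  simp only [mem_image, mem_erase, mem_range]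
  constructor
  · rintro ⟨a, ha, rfl⟩; omega
  · intro h; exact ⟨b + 1, by omega, by omega⟩

lemma vert_mid {n : ℕ} (z : Fin (n+1) → ℕ) (ρ : Equiv.Perm (Fin (n+1))) (k j : ℕ)
    (hk0 : 0 < k) (hj : j ≠ k) (a b : Fin (n+1)) (ha : (a : ℕ) = k - 1) (hb : (b : ℕ) = k) :
    vert z (Equiv.swap a b * ρ) j = vert z ρ j := by
  funext i
  show z i + (if ((Equiv.swap a b) (ρ i) : ℕ) < j then 1 else 0) = _
  congr 1
  rcases eq_or_ne (ρ i) a with h | h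
  · rw [h, Equiv.swap_apply_left]
    exact if_congr (by omega) rfl rfl
  rcases eq_or_ne (ρ i) b with h2 | h2
  · rw [h2, Equiv.swap_apply_right]
    exact if_congr (by omega) rfl rfl
  · rw [Equiv.swap_apply_of_ne_of_ne h h2]

lemma vert_rot0 {n : ℕ} (z : Fin (n+1) → ℕ) (ρ : Equiv.Perm (Fin (n+1))) (j : ℕ) (hj : j ≤ n) :
    vert (fun i => z i + if ρ i = 0 then 1 else 0) ((finRotate (n+1))⁻¹ * ρ) j
      = vert z ρ (j+1) := by
  funext i
  show z i + (if ρ i = 0 then 1 else 0) + (if (((finRotate (n+1))⁻¹ (ρ i) : Fin (n+1)) : ℕ) < j then 1 else 0) = z i + (if ((ρ i : Fin (n+1)) : ℕ) < j + 1 then 1 else 0)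
  by_cases h : ρ i = 0
  · rw [if_pos h, h, rot_inv_zero]
    simp only [Fin.val_last]; rw [Fin.val_zero]
    split_ifs <;> omega
  · have h1 : (((finRotate (n+1))⁻¹ (ρ i) : Fin (n+1)) : ℕ) = (ρ i : ℕ) - 1 := rot_inv_val _ h
    have h2 : (ρ i : ℕ) ≠ 0 := fun hc => h (Fin.ext hc)
    rw [if_neg h, h1]
    have : ((ρ i : ℕ) - 1 < j) ↔ ((ρ i : ℕ) < j + 1) := by omega
    rw [if_congr this rfl rfl]
    omega

lemma vert_rotN {n : ℕ} (z : Fin (n+1) → ℕ) (ρ : Equiv.Perm (Fin (n+1))) (j : ℕ)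
    (h1 : 1 ≤ j) (hj : j ≤ n + 1) (hz : 1 ≤ z (ρ.symm (Fin.last n))) :
    vert (fun i => z i - if ρ i = Fin.last n then 1 else 0) (finRotate (n+1) * ρ) j
      = vert z ρ (j-1) := by
  funext i
  show z i - (if ρ i = Fin.last n then 1 else 0) + (if ((finRotate (n+1) (ρ i) : Fin (n+1)) : ℕ) < j then 1 else 0) = z i + (if ((ρ i : Fin (n+1)) : ℕ) < j - 1 then 1 else 0)
  by_cases h : ρ i = Fin.last n
  · have hzi : 1 ≤ z i := by
      have : i = ρ.symm (Fin.last n) := by rw [← h, Equiv.symm_apply_apply]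
      rw [this]; exact hz
    rw [if_pos h, h, rot_last]
    rw [Fin.val_zero]; simp only [Fin.val_last]
    rw [if_pos (by omega), if_neg (by omega)]
    omega
  · rw [if_neg h, rot_val _ h]
    have h2 : (ρ i : ℕ) ≤ n - 1 ∨ (ρ i : ℕ) < n := by
      have := (ρ i).isLt
      have : (ρ i : ℕ) ≠ n := fun hc => h (Fin.ext (by simp [hc]))
      omega
    have : ((ρ i : ℕ) + 1 < j) ↔ ((ρ i : ℕ) < j - 1) := by omega
    rw [if_congr this rfl rfl]
    omega
-- door transfer lemmas (to be appended inside namespace, with helpers available)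
lemma door_iff_mid {n : ℕ} (L : (Fin (n+1) → ℕ) → ℕ) (z : Fin (n+1) → ℕ)
    (ρ : Equiv.Perm (Fin (n+1))) (k : ℕ) (hk0 : 0 < k)
    (a b : Fin (n+1)) (ha : (a : ℕ) = k - 1) (hb : (b : ℕ) = k) :
    door L (z, Equiv.swap a b * ρ) k ↔ door L (z, ρ) k := by
  unfold door
  have himg : ((Finset.range (n+1+1)).erase k).image (fun j => L (vert z (Equiv.swap a b * ρ) j))
      = ((Finset.range (n+1+1)).erase k).image (fun j => L (vert z ρ j)) := by
    apply Finset.image_congr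
    intro j hj
    have hjk : j ≠ k := ne_of_mem_erase (Finset.mem_coe.1 hj)
    simp only [vert_mid z ρ k j hk0 hjk a b ha hb]
  rw [himg]

lemma door_iff_rot0 {n : ℕ} (L : (Fin (n+1) → ℕ) → ℕ) (z : Fin (n+1) → ℕ)
    (ρ : Equiv.Perm (Fin (n+1))) :
    door L ((fun i => z i + if ρ i = 0 then 1 else 0), (finRotate (n+1))⁻¹ * ρ) (n+1)
      ↔ door L (z, ρ) 0 := by
  unfold door
  have h1 : ((Finset.range (n+1+1)).erase (n+1)) = Finset.range (n+1) := range_erase_top n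
  have h2 : ((Finset.range (n+1)).image
        (fun j => L (vert (fun i => z i + if ρ i = 0 then 1 else 0) ((finRotate (n+1))⁻¹ * ρ) j)))
      = ((Finset.range (n+1+1)).erase 0).image (fun j => L (vert z ρ j)) := by
    have e1 : ((Finset.range (n+1)).image
          (fun j => L (vert (fun i => z i + if ρ i = 0 then 1 else 0) ((finRotate (n+1))⁻¹ * ρ) j)))
        = (Finset.range (n+1)).image (fun j => L (vert z ρ (j+1))) := by
      apply Finset.image_congr
      intro j hj
      have : j ≤ n := by
        have := Finset.mem_coe.1 hj; simp only [Finset.mem_range] at this; omega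
      simp only [vert_rot0 z ρ j this]
    rw [e1, range_erase_zero n, Finset.image_image]
    rfl
  rw [h1, h2]

lemma door_iff_rotN {n : ℕ} (L : (Fin (n+1) → ℕ) → ℕ) (z : Fin (n+1) → ℕ)
    (ρ : Equiv.Perm (Fin (n+1))) (hz1 : 1 ≤ z (ρ.symm (Fin.last n))) :
    door L ((fun i => z i - if ρ i = Fin.last n then 1 else 0), finRotate (n+1) * ρ) 0
      ↔ door L (z, ρ) (n+1) := by
  unfold door
  have h2 : (((Finset.range (n+1+1)).erase 0).image
        (fun j => L (vert (fun i => z i - if ρ i = Fin.last n then 1 else 0) (finRotate (n+1) * ρ) j)))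
      = ((Finset.range (n+1+1)).erase (n+1)).image (fun j => L (vert z ρ j)) := by
    have e1 : (((Finset.range (n+1+1)).erase 0).image
          (fun j => L (vert (fun i => z i - if ρ i = Fin.last n then 1 else 0) (finRotate (n+1) * ρ) j)))
        = ((Finset.range (n+1+1)).erase 0).image (fun j => L (vert z ρ (j-1))) := by
      apply Finset.image_congr
      intro j hj
      have hj' := Finset.mem_coe.1 hj
      rw [Finset.mem_erase, Finset.mem_range] at hj'
      simp only [vert_rotN z ρ j (by omega) (by omega) hz1]
    rw [e1, range_erase_top n, ← erase_zero_image_sub n, Finset.image_image]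
    rfl
  rw [h2]
lemma pivot_props {n m : ℕ} (hm : 0 < m) (L : (Fin (n+1) → ℕ) → ℕ)
    (a : ((Fin (n+1) → ℕ) × Equiv.Perm (Fin (n+1))) × ℕ)
    (hbox : a.1.1 ∈ box (n+1) m) (hk : a.2 < n+2)
    (hdoor : door L a.1 a.2) (hnb : ¬ bdry m n a) :
    (pivot n a).1.1 ∈ box (n+1) m ∧ (pivot n a).2 < n+2 ∧
    door L (pivot n a).1 (pivot n a).2 ∧ ¬ bdry m n (pivot n a) ∧
    pivot n (pivot n a) = a ∧ pivot n a ≠ a := by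
  obtain ⟨⟨z, ρ⟩, k⟩ := a
  simp only at hbox hk hdoor hnb ⊢
  have hzlt : ∀ i, z i < m := fun i => by
    have := (Fintype.mem_piFinset.1 hbox) i
    simpa using this
  by_cases h0 : k = 0
  · subst h0
    have hint : z (ρ.symm 0) ≠ m - 1 := fun h => hnb (Or.inl ⟨rfl, h⟩)
    have hpiv : pivot n ((z, ρ), 0) =
        ((fun i => z i + if ρ i = 0 then 1 else 0, (finRotate (n+1))⁻¹ * ρ), n+1) := by
      simp [pivot]
    rw [hpiv]
    have hiff : ∀ i, (((finRotate (n+1))⁻¹ * ρ) i = Fin.last n) ↔ ρ i = 0 := by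
      intro i
      rw [Equiv.Perm.mul_apply, Equiv.Perm.inv_eq_iff_eq, rot_last]
    have hsymm : ((finRotate (n+1))⁻¹ * ρ).symm (Fin.last n) = ρ.symm 0 := by
      rw [Equiv.symm_apply_eq, Equiv.Perm.mul_apply, Equiv.apply_symm_apply, rot_inv_zero]
    refine ⟨?_, by omega, ?_, ?_, ?_, ?_⟩
    · simp only [box, Fintype.mem_piFinset, Finset.mem_range]
      intro i
      by_cases h : ρ i = 0
      · have hi : i = ρ.symm 0 := by rw [← h, Equiv.symm_apply_apply]
        rw [if_pos h]
        have h5 := hzlt i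
        rw [hi] at h5 ⊢
        omega
      · rw [if_neg h]; have := hzlt i; omega
    · exact (door_iff_rot0 L z ρ).mpr hdoor
    · rintro (⟨h, _⟩ | ⟨_, h⟩)
      · omega
      · simp only [hsymm] at h
        rw [Equiv.apply_symm_apply] at h
        simp at h
    · have h2 : pivot n ((fun i => z i + if ρ i = 0 then 1 else 0,
            (finRotate (n+1))⁻¹ * ρ), n+1) =
          ((fun i => (z i + if ρ i = 0 then 1 else 0) -
              if ((finRotate (n+1))⁻¹ * ρ) i = Fin.last n then 1 else 0,
            finRotate (n+1) * ((finRotate (n+1))⁻¹ * ρ)), 0) := by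
        simp [pivot]
      rw [h2]
      refine Prod.ext (Prod.ext ?_ ?_) rfl
      · funext i
        simp only
        by_cases h : ρ i = 0
        · rw [if_pos h, if_pos ((hiff i).mpr h)]
          omega
        · rw [if_neg h, if_neg (fun hc => h ((hiff i).mp hc))]
          omega
      · simp only [mul_inv_cancel_left]
    · intro h
      have := congrArg Prod.snd h
      simp at this
  by_cases hN : k = n+1
  · subst hN
    have hz1 : 1 ≤ z (ρ.symm (Fin.last n)) := by
      have : z (ρ.symm (Fin.last n)) ≠ 0 := fun h => hnb (Or.inr ⟨rfl, h⟩)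
      omega
    have hpiv : pivot n ((z, ρ), n+1) =
        ((fun i => z i - if ρ i = Fin.last n then 1 else 0, finRotate (n+1) * ρ), 0) := by
      simp [pivot]
    rw [hpiv]
    have hiff : ∀ i, ((finRotate (n+1) * ρ) i = 0) ↔ ρ i = Fin.last n := by
      intro i
      rw [Equiv.Perm.mul_apply, ← rot_last n]
      exact (finRotate (n+1)).apply_eq_iff_eq
    have hsymm : (finRotate (n+1) * ρ).symm 0 = ρ.symm (Fin.last n) := by
      rw [Equiv.symm_apply_eq, Equiv.Perm.mul_apply, Equiv.apply_symm_apply, rot_last]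
    refine ⟨?_, by omega, ?_, ?_, ?_, ?_⟩
    · simp only [box, Fintype.mem_piFinset, Finset.mem_range]
      intro i
      have := hzlt i
      split <;> omega
    · exact (door_iff_rotN L z ρ hz1).mpr hdoor
    · rintro (⟨_, h⟩ | ⟨h, _⟩)
      · simp only [hsymm] at h
        rw [if_pos (Equiv.apply_symm_apply ρ (Fin.last n))] at h
        have := hzlt (ρ.symm (Fin.last n))
        omega
      · omega
    · have h2 : pivot n ((fun i => z i - if ρ i = Fin.last n then 1 else 0,
            finRotate (n+1) * ρ), 0) =
          ((fun i => (z i - if ρ i = Fin.last n then 1 else 0) +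
              if (finRotate (n+1) * ρ) i = 0 then 1 else 0,
            (finRotate (n+1))⁻¹ * (finRotate (n+1) * ρ)), n+1) := by
        simp [pivot]
      rw [h2]
      refine Prod.ext (Prod.ext ?_ ?_) rfl
      · funext i
        simp only
        by_cases h : ρ i = Fin.last n
        · rw [if_pos h, if_pos ((hiff i).mpr h)]
          have : 1 ≤ z i := by
            have : i = ρ.symm (Fin.last n) := by rw [← h, Equiv.symm_apply_apply]
            rw [this]; exact hz1
          omega
        · rw [if_neg h, if_neg (fun hc => h ((hiff i).mp hc))]
          omega
      · simp only [inv_mul_cancel_left]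
    · intro h
      have := congrArg Prod.snd h
      simp at this
  · -- mid case
    have hk1 : 1 ≤ k := by omega
    have hkn : k ≤ n := by omega
    set A : Fin (n+1) := ⟨(k-1) % (n+1), Nat.mod_lt _ n.succ_pos⟩ with hA
    set B : Fin (n+1) := ⟨k % (n+1), Nat.mod_lt _ n.succ_pos⟩ with hB
    have hAval : (A : ℕ) = k - 1 := by simp [hA]; omega
    have hBval : (B : ℕ) = k := by simp [hB]; omega
    have hpiv : pivot n ((z, ρ), k) = ((z, Equiv.swap A B * ρ), k) := by
      simp only [pivot, if_neg h0, if_neg hN]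
      rfl
    rw [hpiv]
    refine ⟨hbox, by omega, ?_, ?_, ?_, ?_⟩
    · exact (door_iff_mid L z ρ k (by omega) A B hAval hBval).mpr hdoor
    · rintro (⟨h, _⟩ | ⟨h, _⟩) <;> omega
    · have h2 : pivot n ((z, Equiv.swap A B * ρ), k)
          = ((z, Equiv.swap A B * (Equiv.swap A B * ρ)), k) := by
        simp only [pivot, if_neg h0, if_neg hN]
        rfl
      rw [h2, ← mul_assoc, Equiv.swap_mul_self, one_mul]
    · intro h
      have hρ : Equiv.swap A B * ρ = ρ := congrArg (fun x => x.1.2) h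
      have hsw : Equiv.swap A B = 1 := mul_right_cancel (hρ.trans (one_mul ρ).symm)
      have hBA : B = A := by
        have h3 := congrArg (fun e => Equiv.toFun e A) hsw
        simpa [Equiv.swap_apply_left] using h3
      have h4 := congrArg Fin.val hBA
      rw [hAval, hBval] at h4
      omega
def E {n : ℕ} (ρ' : Equiv.Perm (Fin n)) : Equiv.Perm (Fin (n+1)) :=
  Equiv.permCongr finSuccEquivLast.symm ρ'.optionCongr

lemma E_castSucc {n : ℕ} (ρ' : Equiv.Perm (Fin n)) (i : Fin n) :
    E ρ' (Fin.castSucc i) = Fin.castSucc (ρ' i) := by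
  simp [E, Equiv.permCongr_apply]

lemma E_last {n : ℕ} (ρ' : Equiv.Perm (Fin n)) : E ρ' (Fin.last n) = Fin.last n := by
  simp [E, Equiv.permCongr_apply]

lemma E_symm_last {n : ℕ} (ρ' : Equiv.Perm (Fin n)) : (E ρ').symm (Fin.last n) = Fin.last n := by
  rw [Equiv.symm_apply_eq, E_last]

lemma E_injective {n : ℕ} : Function.Injective (E (n := n)) := by
  intro a b hab
  have := (Equiv.permCongr finSuccEquivLast.symm).injective hab
  exact Equiv.optionCongr_injective this

lemma E_surj {n : ℕ} (ρ : Equiv.Perm (Fin (n+1))) (h : ρ (Fin.last n) = Fin.last n) :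
    ∃ ρ' : Equiv.Perm (Fin n), E ρ' = ρ := by
  set q : Equiv.Perm (Option (Fin n)) := Equiv.permCongr finSuccEquivLast ρ with hq
  have hqnone : q none = none := by
    simp [hq, Equiv.permCongr_apply, h]
  refine ⟨Equiv.removeNone q, ?_⟩
  have hoc : (Equiv.removeNone q).optionCongr = q := by
    ext x
    cases x with
    | none => simp [hqnone]
    | some a =>
      simp only [Equiv.optionCongr_apply, Option.map_some]
      have hex : ∃ x', q (some a) = some x' := by
        rcases hx : q (some a) with _ | b
        · exfalso
          have := q.injective (hx.trans hqnone.symm)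
          simp at this
        · exact ⟨b, rfl⟩
      obtain ⟨b, hb⟩ := hex
      have h2 : Equiv.removeNone q a = b := by
        have := Equiv.removeNone_some q ⟨b, hb⟩
        rw [hb] at this
        exact Option.some_injective _ this
      rw [h2, hb]
  rw [E, hoc]
  ext x
  simp [hq, Equiv.permCongr_apply]

lemma vert_snoc {n : ℕ} (z' : Fin n → ℕ) (ρ' : Equiv.Perm (Fin n)) (j : ℕ) (hj : j ≤ n) :
    vert (Fin.snoc z' 0) (E ρ') j = Fin.snoc (vert z' ρ' j) 0 := by
  funext i
  refine Fin.lastCases ?_ ?_ i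
  · simp only [vert, Fin.snoc_last, E_last, Fin.val_last]
    rw [if_neg (by omega : ¬ n < j)]
  · intro i'
    simp only [vert, Fin.snoc_castSucc, E_castSucc, Fin.coe_castSucc]

lemma door_snoc {n : ℕ} (L : (Fin (n+1) → ℕ) → ℕ) (z' : Fin n → ℕ) (ρ' : Equiv.Perm (Fin n)) :
    door L (Fin.snoc z' 0, E ρ') (n+1) ↔ fully (fun v' => L (Fin.snoc v' 0)) (z', ρ') := by
  unfold door fully
  rw [range_erase_top n]
  have himg : (Finset.range (n+1)).image (fun j => L (vert (Fin.snoc z' 0) (E ρ') j))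
      = (Finset.range (n+1)).image (fun j => L (Fin.snoc (vert z' ρ' j) 0)) := by
    apply Finset.image_congr
    intro j hj
    have : j ≤ n := by
      have := Finset.mem_coe.1 hj; simp only [Finset.mem_range] at this; omega
    simp only [vert_snoc z' ρ' j this]
  rw [himg]
theorem sperner : ∀ (N m : ℕ), 0 < m → ∀ (L : (Fin N → ℕ) → ℕ),
    (∀ v : Fin N → ℕ, (∀ i, v i ≤ m) → L v ≤ N) →
    (∀ v : Fin N → ℕ, (∀ i, v i ≤ m) → ∀ i : Fin N, v i = 0 → L v ≤ (i : ℕ)) →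
    (∀ v : Fin N → ℕ, (∀ i, v i ≤ m) → ∀ i : Fin N, v i = m → L v ≠ (i : ℕ)) →
    ((((simps N m).filter (fully L)).card : ZMod 2) = 1) := by
  intro N
  induction N with
  | zero =>
    intro m hm L ha hb hc
    have hall : (simps 0 m).filter (fully L) = simps 0 m := by
      apply Finset.filter_true_of_mem
      intro p hp
      intro c hcc
      simp only [Finset.mem_range, Nat.lt_one_iff] at hcc
      have hc0 : c = 0 := by omega
      subst hc0
      refine Finset.mem_image.2 ⟨0, by simp, ?_⟩
      have : L (vert p.1 p.2 0) ≤ 0 := ha _ (fun i => i.elim0)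
      omega
    rw [hall]
    have : (simps 0 m).card = 1 := by
      unfold simps box
      rw [Finset.card_product, Fintype.card_piFinset, Finset.card_univ]
      simp [Fintype.card_perm]
    rw [this]; rfl
  | succ n IH =>
    intro m hm L ha hb hc
    set L' : (Fin n → ℕ) → ℕ := fun v => L (Fin.snoc v 0) with hL'
    have hsg : ∀ v : Fin n → ℕ, (∀ i, v i ≤ m) → ∀ i, (Fin.snoc v 0 : Fin (n+1) → ℕ) i ≤ m := by
      intro v hv i
      refine Fin.lastCases ?_ ?_ i
      · rw [Fin.snoc_last]; omega
      · intro i'; rw [Fin.snoc_castSucc]; exact hv i'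
    have ha' : ∀ v : Fin n → ℕ, (∀ i, v i ≤ m) → L' v ≤ n := by
      intro v hv
      have := hb (Fin.snoc v 0) (hsg v hv) (Fin.last n) (Fin.snoc_last _ _)
      simpa [Fin.val_last] using this
    have hb' : ∀ v : Fin n → ℕ, (∀ i, v i ≤ m) → ∀ i : Fin n, v i = 0 → L' v ≤ (i : ℕ) := by
      intro v hv i hvi
      have := hb (Fin.snoc v 0) (hsg v hv) (Fin.castSucc i)
        (by rw [Fin.snoc_castSucc]; exact hvi)
      simpa [Fin.coe_castSucc] using this
    have hc' : ∀ v : Fin n → ℕ, (∀ i, v i ≤ m) → ∀ i : Fin n, v i = m → L' v ≠ (i : ℕ) := by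
      intro v hv i hvi
      have := hc (Fin.snoc v 0) (hsg v hv) (Fin.castSucc i)
        (by rw [Fin.snoc_castSucc]; exact hvi)
      simpa [Fin.coe_castSucc] using this
    set Φ : Finset (((Fin (n+1) → ℕ) × Equiv.Perm (Fin (n+1))) × ℕ) :=
      ((simps (n+1) m) ×ˢ Finset.range (n+2)).filter (fun a => door L a.1 a.2) with hΦ
    have unpack : ∀ a ∈ Φ, a.1.1 ∈ box (n+1) m ∧ a.2 < n+2 ∧ door L a.1 a.2 := by
      intro a hA
      rw [hΦ, Finset.mem_filter, Finset.mem_product] at hA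
      obtain ⟨⟨h1, h2⟩, h3⟩ := hA
      exact ⟨(Finset.mem_product.1 h1).1, by simpa using h2, h3⟩
    have repack : ∀ a : ((Fin (n+1) → ℕ) × Equiv.Perm (Fin (n+1))) × ℕ,
        a.1.1 ∈ box (n+1) m → a.2 < n+2 → door L a.1 a.2 → a ∈ Φ := by
      intro a h1 h2 h3
      rw [hΦ, Finset.mem_filter, Finset.mem_product]
      refine ⟨⟨Finset.mem_product.2 ⟨h1, Finset.mem_univ _⟩, Finset.mem_range.2 h2⟩, h3⟩
    have step12 : (((simps (n+1) m).filter (fully L)).card : ZMod 2) = (Φ.card : ZMod 2) := by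
      rw [← Finset.sum_boole, hΦ, ← Finset.sum_boole, Finset.sum_product]
      apply Finset.sum_congr rfl
      intro p hp
      have hbox : p.1 ∈ box (n+1) m := (Finset.mem_product.1 hp).1
      have hle : ∀ k, k < (n+1) + 1 → (fun k => L (vert p.1 p.2 k)) k ≤ n+1 :=
        fun k _ => ha _ (vert_grid hbox p.2 k)
      have h := claimA (n+1) (fun k => L (vert p.1 p.2 k)) hle
      rw [Finset.sum_boole]
      exact h.symm
    have stepinv : ((Φ.filter (fun a => ¬ bdry m n a)).card : ZMod 2) = 0 := by
      have hsum : ∑ _a ∈ Φ.filter (fun a => ¬ bdry m n a), (1 : ZMod 2) = 0 := by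
        apply Finset.sum_involution (fun a _ => pivot n a)
        · intro a _; decide
        · intro a ha' _
          have hA := Finset.mem_filter.1 ha'
          obtain ⟨hbox, hk, hdoor⟩ := unpack a hA.1
          exact (pivot_props hm L a hbox hk hdoor hA.2).2.2.2.2.2
        · intro a ha'
          have hA := Finset.mem_filter.1 ha'
          obtain ⟨hbox, hk, hdoor⟩ := unpack a hA.1
          obtain ⟨p1, p2, p3, p4, _, _⟩ := pivot_props hm L a hbox hk hdoor hA.2
          exact Finset.mem_filter.2 ⟨repack _ p1 p2 p3, p4⟩
        · intro a ha'
          have hA := Finset.mem_filter.1 ha'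
          obtain ⟨hbox, hk, hdoor⟩ := unpack a hA.1
          exact (pivot_props hm L a hbox hk hdoor hA.2).2.2.2.2.1
      rw [Finset.sum_const, nsmul_eq_mul, mul_one] at hsum
      exact hsum
    have step5 : ((simps n m).filter (fully L')).card = (Φ.filter (fun a => bdry m n a)).card := by
      apply Finset.card_bij (fun p _ => ((Fin.snoc p.1 0, E p.2), n+1))
      · intro p hp
        rw [Finset.mem_filter] at hp
        obtain ⟨hpmem, hfull⟩ := hp
        have hbox' : p.1 ∈ box n m := (Finset.mem_product.1 hpmem).1
        have hboxsnoc : Fin.snoc p.1 0 ∈ box (n+1) m := by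
          simp only [box, Fintype.mem_piFinset, Finset.mem_range] at hbox' ⊢
          intro i
          refine Fin.lastCases ?_ ?_ i
          · rw [Fin.snoc_last]; omega
          · intro i'; rw [Fin.snoc_castSucc]; exact hbox' i'
        have hfull' : fully L' (p.1, p.2) := by rwa [Prod.mk.eta]
        have hdoor : door L (Fin.snoc p.1 0, E p.2) (n+1) := (door_snoc L p.1 p.2).mpr hfull'
        refine Finset.mem_filter.2 ⟨repack _ hboxsnoc (by omega) hdoor, Or.inr ⟨rfl, ?_⟩⟩
        show (Fin.snoc p.1 0 : Fin (n+1) → ℕ) ((E p.2).symm (Fin.last n)) = 0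
        rw [E_symm_last, Fin.snoc_last]
      · intro p1 h1 p2 h2 heq
        simp only [Prod.mk.injEq] at heq
        obtain ⟨⟨hz, hρ⟩, _⟩ := heq
        have hz' : p1.1 = p2.1 := by
          funext i
          have := congrFun hz (Fin.castSucc i)
          rwa [Fin.snoc_castSucc, Fin.snoc_castSucc] at this
        exact Prod.ext hz' (E_injective hρ)
      · intro a hA
        rw [Finset.mem_filter] at hA
        obtain ⟨hmem, hbd⟩ := hA
        obtain ⟨hbox, hk, hdoor⟩ := unpack a hmem
        obtain ⟨⟨z, ρ⟩, k⟩ := a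
        dsimp only at hbox hk hdoor hbd
        cases hbd with
        | inl h =>
          exfalso
          obtain ⟨hk0, hzm⟩ := h
          subst hk0
          replace hzm : z (ρ.symm 0) = m - 1 := hzm
          have hval : ((ρ.symm 0 : Fin (n+1)) : ℕ) ∈ Finset.range (n+1) := by
            simp [Fin.is_lt]; omega
          obtain ⟨j, hj, hLj⟩ := Finset.mem_image.1 (hdoor hval)
          rw [Finset.mem_erase, Finset.mem_range] at hj
          have hv : vert z ρ j (ρ.symm 0) = m := by
            unfold vert
            rw [Equiv.apply_symm_apply]
            rw [Fin.val_zero]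
            rw [if_pos (by omega), hzm]
            omega
          exact hc (vert z ρ j) (vert_grid hbox ρ j) (ρ.symm 0) hv hLj
        | inr h =>
          obtain ⟨hkN, hz0⟩ := h
          subst hkN
          replace hz0 : z (ρ.symm (Fin.last n)) = 0 := hz0
          have hlast : ρ.symm (Fin.last n) = Fin.last n := by
            have hn : (n : ℕ) ∈ Finset.range (n+1) := by simp
            obtain ⟨j, hj, hLj⟩ := Finset.mem_image.1 (hdoor hn)
            rw [Finset.mem_erase, Finset.mem_range] at hj
            have hv0 : vert z ρ j (ρ.symm (Fin.last n)) = 0 := by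
              unfold vert
              rw [Equiv.apply_symm_apply, hz0]
              simp only [Fin.val_last]
              rw [if_neg (by omega)]
            have hble := hb (vert z ρ j) (vert_grid hbox ρ j) (ρ.symm (Fin.last n)) hv0
            rw [hLj] at hble
            have hlt := (ρ.symm (Fin.last n)).isLt
            exact Fin.ext (by simp [Fin.val_last]; omega)
          have hρlast : ρ (Fin.last n) = Fin.last n := by
            conv_lhs => rw [← hlast]
            rw [Equiv.apply_symm_apply]
          obtain ⟨ρ', hρ'⟩ := E_surj ρ hρlast
          have hzlast : z (Fin.last n) = 0 := by rw [hlast] at hz0; exact hz0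
          have hsnoc : Fin.snoc (fun i => z (Fin.castSucc i)) 0 = z := by
            funext i
            refine Fin.lastCases ?_ ?_ i
            · rw [Fin.snoc_last, hzlast]
            · intro i'; rw [Fin.snoc_castSucc]
          refine ⟨(fun i => z (Fin.castSucc i), ρ'), ?_, ?_⟩
          · refine Finset.mem_filter.2 ⟨?_, ?_⟩
            · apply Finset.mem_product.2
              refine ⟨?_, Finset.mem_univ _⟩
              simp only [box, Fintype.mem_piFinset, Finset.mem_range] at hbox ⊢
              intro i
              exact hbox (Fin.castSucc i)
            · have hd : door L (Fin.snoc (fun i => z (Fin.castSucc i)) 0, E ρ') (n+1) := by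
                rw [hsnoc, hρ']
                exact hdoor
              exact (door_snoc L (fun i => z (Fin.castSucc i)) ρ').mp hd
          · simp only [Prod.mk.injEq]
            exact ⟨⟨hsnoc, hρ'⟩, trivial⟩
    have hcast : (Φ.card : ZMod 2)
        = ((Φ.filter (fun a => bdry m n a)).card : ZMod 2)
          + ((Φ.filter (fun a => ¬ bdry m n a)).card : ZMod 2) := by
      rw [← Nat.cast_add, Finset.card_filter_add_card_filter_not]
    rw [step12, hcast, stepinv, add_zero, ← step5]
    exact IH m hm L' ha' hb' hc'

end SpernerCube

open SpernerCube in
lemma approx_lemma (n : ℕ) (f : (Fin n → ℝ) → (Fin n → ℝ)) (K : NNReal) (hf : LipschitzWith K f)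
    (hface0 : ∀ i : Fin n, ∀ x ∈ Set.Icc (0 : Fin n → ℝ) 1,
      x i = 0 → f x ∈ Set.Icc (0 : Fin n → ℝ) 1 ∧ f x i = 0)
    (hface1 : ∀ i : Fin n, ∀ x ∈ Set.Icc (0 : Fin n → ℝ) 1,
      x i = 1 → f x ∈ Set.Icc (0 : Fin n → ℝ) 1 ∧ f x i = 1)
    (y : Fin n → ℝ) (hy : ∀ i, 0 < y i ∧ y i < 1) (m : ℕ) (hm : 0 < m) :
    ∃ x ∈ Set.Icc (0 : Fin n → ℝ) 1, dist (f x) y ≤ (K : ℝ) / m := by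
  classical
  set c : (Fin n → ℕ) → (Fin n → ℝ) := fun v i => (v i : ℝ) / m with hc
  have hcIcc : ∀ v : Fin n → ℕ, (∀ i, v i ≤ m) → c v ∈ Set.Icc (0 : Fin n → ℝ) 1 := by
    intro v hv
    constructor
    · intro i
      show (0:ℝ) ≤ (v i : ℝ) / m
      positivity
    · intro i
      show (v i : ℝ) / m ≤ 1
      rw [div_le_one (by positivity)]
      exact_mod_cast hv i
  set S : (Fin n → ℕ) → Finset (Fin n) :=
    fun v => Finset.univ.filter (fun i => f (c v) i ≤ y i) with hS
  set L : (Fin n → ℕ) → ℕ :=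
    fun v => if h : (S v).Nonempty then (((S v).min' h : Fin n) : ℕ) else n with hL
  have ha : ∀ v : Fin n → ℕ, (∀ i, v i ≤ m) → L v ≤ n := by
    intro v _
    simp only [hL]
    split
    · exact le_of_lt (Fin.is_lt _)
    · exact le_rfl
  have hLlt : ∀ v (i : Fin n), L v = (i : ℕ) → f (c v) i ≤ y i := by
    intro v i hLv
    simp only [hL] at hLv
    split at hLv
    · next h =>
      have hmem := (S v).min'_mem h
      have : (S v).min' h = i := Fin.ext hLv
      rw [this] at hmem
      simp only [hS] at hmem
      simpa using hmem
    · exact absurd hLv (by have := i.isLt; omega)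
  have hLgt : ∀ v (i : Fin n) (k : ℕ), L v = k → (i : ℕ) < k → y i < f (c v) i := by
    intro v i k hLv hik
    by_contra hcon
    push_neg at hcon
    have hiS : i ∈ S v := by simp only [hS]; simpa using hcon
    have hne : (S v).Nonempty := ⟨i, hiS⟩
    simp only [hL] at hLv
    simp only [dif_pos hne] at hLv
    have := (S v).min'_le i hiS
    have hval : (((S v).min' hne : Fin n) : ℕ) ≤ (i : ℕ) := this
    omega
  have hb : ∀ v : Fin n → ℕ, (∀ i, v i ≤ m) → ∀ i : Fin n, v i = 0 → L v ≤ (i : ℕ) := by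
    intro v hv i hvi
    have hcv := hcIcc v hv
    have hcv0 : c v i = 0 := by
      show (v i : ℝ) / m = 0
      rw [hvi]; simp
    obtain ⟨_, hfi⟩ := hface0 i (c v) hcv hcv0
    have hiS : i ∈ S v := by
      simp only [hS, Finset.mem_filter, Finset.mem_univ, true_and]
      rw [hfi]
      exact le_of_lt (hy i).1
    have hne : (S v).Nonempty := ⟨i, hiS⟩
    simp only [hL, dif_pos hne]
    exact (S v).min'_le i hiS
  have hcfc : ∀ v : Fin n → ℕ, (∀ i, v i ≤ m) → ∀ i : Fin n, v i = m → L v ≠ (i : ℕ) := by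
    intro v hv i hvi
    have hcv := hcIcc v hv
    have hcv1 : c v i = 1 := by
      show (v i : ℝ) / m = 1
      rw [hvi, div_self (by exact_mod_cast hm.ne')]
    obtain ⟨_, hfi⟩ := hface1 i (c v) hcv hcv1
    have hiS : i ∉ S v := by
      simp only [hS, Finset.mem_filter, Finset.mem_univ, true_and]
      rw [hfi]
      exact not_le.2 (hy i).2
    intro hLv
    exact hiS (by
      have := hLlt v i hLv
      simp only [hS]
      simpa using this)
  -- get a fully labeled simplex
  obtain ⟨p, hp, hfull⟩ : ∃ p ∈ simps n m, fully L p := by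
    by_contra hcon
    push_neg at hcon
    have : (simps n m).filter (fully L) = ∅ := by
      rw [Finset.filter_eq_empty_iff]
      exact hcon
    have h1 := sperner n m hm L ha hb hcfc
    rw [this] at h1
    simp at h1
  obtain ⟨z, π⟩ := p
  have hbox : z ∈ box n m := (Finset.mem_product.1 hp).1
  have hgrid : ∀ k, ∀ i, vert z π k i ≤ m := fun k => vert_grid hbox π k
  -- x is the base vertex
  refine ⟨c (vert z π 0), hcIcc _ (hgrid 0), ?_⟩
  have hKm : (0:ℝ) ≤ (K : ℝ) / m := by positivity
  rw [dist_pi_le_iff hKm]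
  intro i
  -- distance between vertex images
  have hvd : ∀ k, k ≤ n → dist (f (c (vert z π k))) (f (c (vert z π 0))) ≤ (K : ℝ) / m := by
    intro k _
    have hd : dist (c (vert z π k)) (c (vert z π 0)) ≤ 1 / m := by
      rw [dist_pi_le_iff (by positivity)]
      intro j
      show dist ((vert z π k j : ℝ) / m) ((vert z π 0 j : ℝ) / m) ≤ 1 / m
      rw [Real.dist_eq, div_sub_div_same, abs_div,
        abs_of_nonneg (Nat.cast_nonneg (α := ℝ) m)]
      have hv0 : vert z π 0 j = z j := by unfold vert; simp
      have hvk : vert z π k j = z j ∨ vert z π k j = z j + 1 := by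
        unfold vert; split <;> omega
      have hnum : |((vert z π k j : ℕ) : ℝ) - ((vert z π 0 j : ℕ) : ℝ)| ≤ 1 := by
        rcases hvk with h | h <;> rw [h, hv0] <;> push_cast <;> simp
      gcongr
    calc dist (f (c (vert z π k))) (f (c (vert z π 0))) ≤ (K : ℝ) * dist (c (vert z π k)) (c (vert z π 0)) := hf.dist_le_mul _ _
      _ ≤ (K : ℝ) * (1 / m) := by
          apply mul_le_mul_of_nonneg_left hd (by positivity)
      _ = (K : ℝ) / m := by ring
  -- vertex with label i
  obtain ⟨k₁, hk₁, hLk₁⟩ := Finset.mem_image.1 (hfull (Finset.mem_range.2 (by omega : (i:ℕ) < n + 1)))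
  obtain ⟨k₂, hk₂, hLk₂⟩ := Finset.mem_image.1 (hfull (Finset.mem_range.2 (by omega : (i:ℕ) + 1 < n + 1)))
  rw [Finset.mem_range] at hk₁ hk₂
  have h1 : f (c (vert z π k₁)) i ≤ y i := hLlt _ i hLk₁
  have h2 : y i < f (c (vert z π k₂)) i := hLgt _ i ((i:ℕ)+1) hLk₂ (by omega)
  have e1 : dist (f (c (vert z π k₁)) i) (f (c (vert z π 0)) i) ≤ (K:ℝ)/m :=
    le_trans (dist_le_pi_dist _ _ i) (hvd k₁ (by omega))
  have e2 : dist (f (c (vert z π k₂)) i) (f (c (vert z π 0)) i) ≤ (K:ℝ)/m :=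
    le_trans (dist_le_pi_dist _ _ i) (hvd k₂ (by omega))
  rw [Real.dist_eq] at e1 e2 ⊢
  rw [abs_le] at e1 e2 ⊢
  constructor <;> linarith [e1.1, e1.2, e2.1, e2.2]

/-- **Face-preserving Lipschitz maps of the cube are onto.** If a Lipschitz map
`f : ℝⁿ → ℝⁿ` maps each face of the unit cube `[0,1]ⁿ` into itself, then the image of the cube
under `f` contains the whole cube. -/
theorem surjective_of_maps_faces_to_themselves
    (n : ℕ) (f : (Fin n → ℝ) → (Fin n → ℝ)) (K : NNReal) (hf : LipschitzWith K f)
    (hface0 : ∀ i : Fin n, ∀ x ∈ Set.Icc (0 : Fin n → ℝ) 1,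
      x i = 0 → f x ∈ Set.Icc (0 : Fin n → ℝ) 1 ∧ f x i = 0)
    (hface1 : ∀ i : Fin n, ∀ x ∈ Set.Icc (0 : Fin n → ℝ) 1,
      x i = 1 → f x ∈ Set.Icc (0 : Fin n → ℝ) 1 ∧ f x i = 1) :
    Set.Icc (0 : Fin n → ℝ) 1 ⊆ f '' Set.Icc (0 : Fin n → ℝ) 1 := by
  intro y hy
  have hy' : ∀ i, 0 ≤ y i ∧ y i ≤ 1 := by
    obtain ⟨h1, h2⟩ := hy
    exact fun i => ⟨h1 i, h2 i⟩
  have hC : IsClosed (f '' Set.Icc (0 : Fin n → ℝ) 1) :=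
    (isCompact_Icc.image hf.continuous).isClosed
  rw [← hC.closure_eq, Metric.mem_closure_iff]
  intro ε hε
  set θ : ℝ := min (1/2) (ε/2) with hθ
  have hθ0 : 0 < θ := lt_min (by norm_num) (by linarith)
  have hθ1 : θ ≤ 1/2 := min_le_left _ _
  have hθε : θ ≤ ε/2 := min_le_right _ _
  set y' : Fin n → ℝ := fun i => (1 - θ) * y i + θ * (1/2) with hy'def
  have hy'mem : ∀ i, 0 < y' i ∧ y' i < 1 := by
    intro i
    obtain ⟨h1, h2⟩ := hy' i
    constructor
    · show 0 < (1 - θ) * y i + θ * (1/2)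
      nlinarith
    · show (1 - θ) * y i + θ * (1/2) < 1
      nlinarith
  have hdyy' : dist y y' ≤ θ/2 := by
    rw [dist_pi_le_iff (by linarith)]
    intro i
    show dist (y i) ((1 - θ) * y i + θ * (1/2)) ≤ θ/2
    rw [Real.dist_eq, abs_le]
    obtain ⟨h1, h2⟩ := hy' i
    constructor <;> nlinarith
  obtain ⟨m, hm0, hmK⟩ : ∃ m : ℕ, 0 < m ∧ (K : ℝ)/m < ε/2 := by
    obtain ⟨m, hm⟩ := exists_nat_gt ((K : ℝ)/(ε/2))
    refine ⟨m + 1, Nat.succ_pos _, ?_⟩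
    have hm1 : (K : ℝ)/(ε/2) < m + 1 := by
      calc (K : ℝ)/(ε/2) < m := hm
        _ ≤ m + 1 := by norm_num
    have hK0 : (0:ℝ) ≤ K := K.coe_nonneg
    rw [div_lt_iff₀ (by linarith : (0:ℝ) < ε/2)] at hm1
    rw [div_lt_iff₀ (by positivity : (0:ℝ) < ((m+1 : ℕ) : ℝ))]
    push_cast
    nlinarith
  obtain ⟨x, hx, hdx⟩ := approx_lemma n f K hf hface0 hface1 y' hy'mem m hm0
  refine ⟨f x, ⟨x, hx, rfl⟩, ?_⟩
  calc dist y (f x) ≤ dist y y' + dist y' (f x) := dist_triangle _ _ _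
    _ ≤ θ/2 + (K : ℝ)/m := add_le_add hdyy' (by rwa [dist_comm] at hdx)
    _ < ε := by linarith
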